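/- Let F be a spreading linear triple system on a finite set V with |V| = n > 5, and let T ∈ F. Then the number of triples T' ∈ F that are adjacent to T is at least Val(T)·(Val(T) − 3)/6. -/
import Mathlib


open Finset

variable {α : Type*}

/-- A pair of (distinct) vertices is covered if it lies in some triple of `F`. -/
def Covered [DecidableEq α] (F : Finset (Finset α)) (x y : α) : Prop :=
  ∃ T ∈ F, x ∈ T ∧ y ∈ T

instance [DecidableEq α] (F : Finset (Finset α)) (x y : α) : Decidable (Covered F x y) :=
  inferInstanceAs (Decidable (∃ T ∈ F, x ∈ T ∧ y ∈ T))

/-- Linear triple system on `V`. -/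
def IsLinearTS [DecidableEq α] (V : Finset α) (F : Finset (Finset α)) : Prop :=
  (∀ T ∈ F, T ⊆ V ∧ T.card = 3) ∧
    ∀ x ∈ V, ∀ y ∈ V, x ≠ y → (F.filter fun T => x ∈ T ∧ y ∈ T).card ≤ 1

/-- Steiner triple system on `V`. -/
def IsSTS [DecidableEq α] (V : Finset α) (F : Finset (Finset α)) : Prop :=
  (∀ T ∈ F, T ⊆ V ∧ T.card = 3) ∧
    ∀ x ∈ V, ∀ y ∈ V, x ≠ y → (F.filter fun T => x ∈ T ∧ y ∈ T).card = 1

/-- Neighbourhood of `V'` with respect to the triple system `F` on `V`. -/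
def nbhd [DecidableEq α] (V : Finset α) (F : Finset (Finset α)) (V' : Finset α) : Finset α :=
  (V \ V').filter fun z => ∃ x ∈ V', ∃ y ∈ V', x ≠ y ∧ ({x, y, z} : Finset α) ∈ F

/-- `F` is spreading: the closure of every nontrivial subset is `V`. -/
def IsSpreading [DecidableEq α] (V : Finset α) (F : Finset (Finset α)) : Prop :=
  ∀ V' ⊆ V, 3 ≤ V'.card → V' ∉ F →
    ∀ W, V' ⊆ W → W ⊆ V → nbhd V F W = ∅ → W = V

/-- `F` is weakly spreading. -/
def IsWeaklySpreading [DecidableEq α] (V : Finset α) (F : Finset (Finset α)) : Prop :=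
  ∀ F' ⊆ F, 2 ≤ F'.card →
    ∀ W, F'.biUnion id ⊆ W → W ⊆ V → nbhd V F W = ∅ → W = V

/-- `Val(T)`: number of private neighbours of the triple `T`. -/
def valT [DecidableEq α] (V : Finset α) (F : Finset (Finset α)) (T : Finset α) : ℕ :=
  ((V \ T).filter fun v => (T.filter fun t => Covered F v t).card = 1).card

/-- Two triples are adjacent if pairs of each span a `C₄` in the complement of the skeleton. -/
def AdjT [DecidableEq α] (F : Finset (Finset α)) (T T' : Finset α) : Prop :=
  ∃ v₁ ∈ T, ∃ v₂ ∈ T, ∃ u₁ ∈ T', ∃ u₂ ∈ T',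
    v₁ ≠ v₂ ∧ u₁ ≠ u₂ ∧ v₁ ≠ u₁ ∧ v₁ ≠ u₂ ∧ v₂ ≠ u₁ ∧ v₂ ≠ u₂ ∧
    ¬Covered F v₁ u₁ ∧ ¬Covered F u₁ v₂ ∧ ¬Covered F v₂ u₂ ∧ ¬Covered F u₂ v₁

instance [DecidableEq α] (F : Finset (Finset α)) (T T' : Finset α) : Decidable (AdjT F T T') :=
  inferInstanceAs (Decidable (∃ v₁ ∈ T, ∃ v₂ ∈ T, ∃ u₁ ∈ T', ∃ u₂ ∈ T',
    v₁ ≠ v₂ ∧ u₁ ≠ u₂ ∧ v₁ ≠ u₁ ∧ v₁ ≠ u₂ ∧ v₂ ≠ u₁ ∧ v₂ ≠ u₂ ∧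
    ¬Covered F v₁ u₁ ∧ ¬Covered F u₁ v₂ ∧ ¬Covered F v₂ u₂ ∧ ¬Covered F u₂ v₁))

lemma covered_symm [DecidableEq α] {F : Finset (Finset α)} {a b : α}
    (h : Covered F a b) : Covered F b a := by
  obtain ⟨T, hT, h1, h2⟩ := h
  exact ⟨T, hT, h2, h1⟩

/-- In a spreading system on more than 3 vertices there are no three pairwise
uncovered vertices. -/
lemma no_indep_triangle [DecidableEq α] {V : Finset α} {F : Finset (Finset α)}
    (hS : IsSpreading V F) (hbig : 3 < V.card) {a b c : α}
    (ha : a ∈ V) (hb : b ∈ V) (hc : c ∈ V)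
    (hab : a ≠ b) (hac : a ≠ c) (hbc : b ≠ c)
    (nab : ¬Covered F a b) (nac : ¬Covered F a c) (nbc : ¬Covered F b c) : False := by
  set V' : Finset α := {a, b, c} with hV'
  have hsub : V' ⊆ V := by
    intro w hw
    simp only [hV', mem_insert, mem_singleton] at hw
    rcases hw with rfl | rfl | rfl <;> assumption
  have hcard : V'.card = 3 := by
    rw [hV', card_insert_of_notMem (by simp [hab, hac]),
      card_insert_of_notMem (by simp [hbc]), card_singleton]
  have hnotF : V' ∉ F := fun hmem => nab ⟨V', hmem, by simp [hV'], by simp [hV']⟩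
  have hkey : ∀ p ∈ V', ∀ q ∈ V', p ≠ q → ¬Covered F p q := by
    intro p hp q hq hpq
    simp only [hV', mem_insert, mem_singleton] at hp hq
    have nba : ¬Covered F b a := fun h => nab (covered_symm h)
    have nca : ¬Covered F c a := fun h => nac (covered_symm h)
    have ncb : ¬Covered F c b := fun h => nbc (covered_symm h)
    rcases hp with rfl | rfl | rfl <;> rcases hq with rfl | rfl | rfl <;>
      first | (exact absurd rfl hpq) | assumption
  have hnb : nbhd V F V' = ∅ := by
    rw [Finset.eq_empty_iff_forall_notMem]
    intro w hw
    rw [nbhd, mem_filter] at hw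
    obtain ⟨-, p, hp, q, hq, hpq, hF⟩ := hw
    exact hkey p hp q hq hpq ⟨{p, q, w}, hF, by simp, by simp⟩
  have := hS V' hsub (by omega) hnotF V' (Finset.Subset.refl _) hsub hnb
  rw [← this] at hbig
  omega

/-- In a spreading system on more than 4 vertices, no triple can be "isolated" by a
vertex: given `C ∈ F` and a vertex `y` uncovered with every vertex of `C`,
the set `C ∪ {y}` would be closed. -/
lemma no_closed_four [DecidableEq α] {V : Finset α} {F : Finset (Finset α)}
    (hL : IsLinearTS V F) (hS : IsSpreading V F) (hbig : 4 < V.card) {C : Finset α} {y : α}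
    (hC : C ∈ F) (hy : y ∈ V) (hyC : y ∉ C)
    (h : ∀ e ∈ C, ¬Covered F e y) : False := by
  have hC3 : C.card = 3 := (hL.1 C hC).2
  have hCV : C ⊆ V := (hL.1 C hC).1
  set W : Finset α := insert y C with hW
  have hWV : W ⊆ V := by
    intro w hw
    rw [hW, mem_insert] at hw
    rcases hw with rfl | hw
    · exact hy
    · exact hCV hw
  have hWcard : W.card = 4 := by
    rw [hW, card_insert_of_notMem hyC, hC3]
  have hWF : W ∉ F := fun hmem => by
    have := (hL.1 W hmem).2
    omega
  have hnb : nbhd V F W = ∅ := by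
    rw [Finset.eq_empty_iff_forall_notMem]
    intro w hw
    rw [nbhd, mem_filter] at hw
    obtain ⟨hw1, p, hp, q, hq, hpq, hF⟩ := hw
    rw [mem_sdiff] at hw1
    rw [hW, mem_insert] at hp hq
    rcases hp with rfl | hp
    · rcases hq with rfl | hq
      · exact hpq rfl
      · exact h q hq ⟨{p, q, w}, hF, by simp, by simp⟩
    · rcases hq with rfl | hq
      · exact h p hp ⟨{p, q, w}, hF, by simp, by simp⟩
      · -- p, q ∈ C : linearity forces {p,q,w} = C, so w ∈ W, contradiction
        have hlin := hL.2 p (hCV hp) q (hCV hq) hpq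
        have hCmem : C ∈ F.filter fun T => p ∈ T ∧ q ∈ T :=
          mem_filter.mpr ⟨hC, hp, hq⟩
        have hDmem : ({p, q, w} : Finset α) ∈ F.filter fun T => p ∈ T ∧ q ∈ T :=
          mem_filter.mpr ⟨hF, by simp, by simp⟩
        have hEq : C = ({p, q, w} : Finset α) :=
          Finset.card_le_one.mp hlin C hCmem _ hDmem
        have : w ∈ C := by rw [hEq]; simp
        exact hw1.2 (by rw [hW]; exact mem_insert_of_mem this)
  have := hS W hWV (by omega) hWF W (Finset.Subset.refl _) hWV hnb
  rw [← this] at hbig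
  omega

/-- The (unique) triple covering a pair, chosen by choice. -/
noncomputable def coverTriple [DecidableEq α] (F : Finset (Finset α)) (p : α × α) :
    Finset α :=
  if h : ∃ C ∈ F, p.1 ∈ C ∧ p.2 ∈ C then h.choose else ∅

lemma coverTriple_spec [DecidableEq α] {F : Finset (Finset α)} {p : α × α}
    (h : ∃ C ∈ F, p.1 ∈ C ∧ p.2 ∈ C) :
    coverTriple F p ∈ F ∧ p.1 ∈ coverTriple F p ∧ p.2 ∈ coverTriple F p := by
  rw [coverTriple, dif_pos h]
  exact ⟨h.choose_spec.1, h.choose_spec.2.1, h.choose_spec.2.2⟩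

/-- In a spreading linear triple system on `n > 5` vertices, every triple
`T` has at least `Val(T)(Val(T) - 3)/6` adjacent triples. -/
theorem statement_15 {α : Type*} [DecidableEq α] (V : Finset α) (F : Finset (Finset α))
    (n : ℕ) (hn : V.card = n) (hL : IsLinearTS V F) (hS : IsSpreading V F) (hV : 5 < n)
    (T : Finset α) (hT : T ∈ F) :
    (valT V F T : ℝ) * ((valT V F T : ℝ) - 3) / 6
      ≤ ((F.filter fun T' => AdjT F T T').card : ℝ) := by
  classical
  have hbig3 : 3 < V.card := by omega
  have hbig4 : 4 < V.card := by omega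
  have hTV : T ⊆ V := (hL.1 T hT).1
  obtain ⟨x, y, z, hxy, hxz, hyz, hTxyz⟩ := Finset.card_eq_three.mp (hL.1 T hT).2
  have hxT : x ∈ T := by rw [hTxyz]; simp
  have hyT : y ∈ T := by rw [hTxyz]; simp
  have hzT : z ∈ T := by rw [hTxyz]; simp
  -- the set of private neighbours
  set S : Finset α := (V \ T).filter (fun v => (T.filter fun t => Covered F v t).card = 1)
    with hSdef
  have hvalT : valT V F T = S.card := rfl
  have hSmem : ∀ v ∈ S, v ∈ V ∧ v ∉ T := by
    intro v hv
    have := (mem_filter.mp hv).1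
    exact mem_sdiff.mp this
  -- uniqueness of the covered vertex of T for a private neighbour
  have uniq : ∀ v ∈ S, ∀ t ∈ T, Covered F v t → ∀ t' ∈ T, t' ≠ t → ¬Covered F v t' := by
    intro v hv t ht hc t' ht' hne hc'
    have hv1 : (T.filter fun t => Covered F v t).card = 1 := (mem_filter.mp hv).2
    have hsub : ({t, t'} : Finset α) ⊆ T.filter fun s => Covered F v s := by
      intro w hw
      simp only [mem_insert, mem_singleton] at hw
      rcases hw with rfl | rfl
      · exact mem_filter.mpr ⟨ht, hc⟩
      · exact mem_filter.mpr ⟨ht', hc'⟩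
    have h2 : ({t, t'} : Finset α).card = 2 := by
      rw [card_insert_of_notMem (by simp [hne.symm]), card_singleton]
    have := card_le_card hsub
    omega
  -- two other vertices of T
  have others : ∀ t ∈ T, ∃ t₁ ∈ T, ∃ t₂ ∈ T, t₁ ≠ t₂ ∧ t₁ ≠ t ∧ t₂ ≠ t := by
    intro t ht
    rw [hTxyz] at ht
    simp only [mem_insert, mem_singleton] at ht
    rcases ht with rfl | rfl | rfl
    · exact ⟨y, hyT, z, hzT, hyz, hxy.symm, hxz.symm⟩
    · exact ⟨x, hxT, z, hzT, hxz, hxy, hyz.symm⟩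
    · exact ⟨x, hxT, y, hyT, hxy, hxz, hyz⟩
  -- private neighbours of the same class are covered
  have covS : ∀ u ∈ S, ∀ v ∈ S, u ≠ v → ∀ t ∈ T, Covered F u t → Covered F v t →
      Covered F u v := by
    intro u hu v hv huv t ht hcu hcv
    by_contra hnc
    obtain ⟨t₁, ht₁, t₂, ht₂, h12, h1t, h2t⟩ := others t ht
    exact no_indep_triangle hS hbig3 (hSmem u hu).1 (hSmem v hv).1 (hTV ht₁)
      huv (fun h => (hSmem u hu).2 (h ▸ ht₁)) (fun h => (hSmem v hv).2 (h ▸ ht₁))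
      hnc (uniq u hu t ht hcu t₁ ht₁ h1t) (uniq v hv t ht hcv t₁ ht₁ h1t)
  -- any triple containing two same-class private neighbours is adjacent to T
  have adjS : ∀ u ∈ S, ∀ v ∈ S, u ≠ v → ∀ t ∈ T, Covered F u t → Covered F v t →
      ∀ C ∈ F, u ∈ C → v ∈ C → AdjT F T C := by
    intro u hu v hv huv t ht hcu hcv C hC huC hvC
    obtain ⟨t₁, ht₁, t₂, ht₂, h12, h1t, h2t⟩ := others t ht
    have hu1 : ¬Covered F u t₁ := uniq u hu t ht hcu t₁ ht₁ h1t
    have hu2 : ¬Covered F u t₂ := uniq u hu t ht hcu t₂ ht₂ h2t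
    have hv1 : ¬Covered F v t₁ := uniq v hv t ht hcv t₁ ht₁ h1t
    have hv2 : ¬Covered F v t₂ := uniq v hv t ht hcv t₂ ht₂ h2t
    refine ⟨t₁, ht₁, t₂, ht₂, u, huC, v, hvC, h12, huv, ?_, ?_, ?_, ?_, ?_, ?_, ?_, ?_⟩
    · exact fun h => (hSmem u hu).2 (h ▸ ht₁)
    · exact fun h => (hSmem v hv).2 (h ▸ ht₁)
    · exact fun h => (hSmem u hu).2 (h ▸ ht₂)
    · exact fun h => (hSmem v hv).2 (h ▸ ht₂)
    · exact fun h => hu1 (covered_symm h)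
    · exact hu2
    · exact fun h => hv2 (covered_symm h)
    · exact hv1
  -- no triple contains three same-class private neighbours
  have noTriple : ∀ C ∈ F, ∀ t ∈ T, ∀ a ∈ S, ∀ b ∈ S, ∀ c ∈ S,
      a ∈ C → b ∈ C → c ∈ C → a ≠ b → a ≠ c → b ≠ c →
      Covered F a t → Covered F b t → Covered F c t → False := by
    intro C hC t ht a ha b hb c hc haC hbC hcC hab hac hbc ca cb cc
    obtain ⟨t₁, ht₁, t₂, ht₂, h12, h1t, h2t⟩ := others t ht
    have hsub : ({a, b, c} : Finset α) ⊆ C := by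
      intro w hw
      simp only [mem_insert, mem_singleton] at hw
      rcases hw with rfl | rfl | rfl <;> assumption
    have habc : ({a, b, c} : Finset α).card = 3 := by
      rw [card_insert_of_notMem (by simp [hab, hac]),
        card_insert_of_notMem (by simp [hbc]), card_singleton]
    have hCeq : ({a, b, c} : Finset α) = C :=
      Finset.eq_of_subset_of_card_le hsub (by rw [habc, (hL.1 C hC).2])
    refine no_closed_four hL hS hbig4 hC (hTV ht₁) ?_ ?_
    · rw [← hCeq]
      simp only [mem_insert, mem_singleton]
      push_neg
      exact ⟨fun h => (hSmem a ha).2 (h ▸ ht₁), fun h => (hSmem b hb).2 (h ▸ ht₁),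
        fun h => (hSmem c hc).2 (h ▸ ht₁)⟩
    · intro e he
      rw [← hCeq] at he
      simp only [mem_insert, mem_singleton] at he
      rcases he with rfl | rfl | rfl
      · exact uniq e ha t ht ca t₁ ht₁ h1t
      · exact uniq e hb t ht cb t₁ ht₁ h1t
      · exact uniq e hc t ht cc t₁ ht₁ h1t
  -- the classes
  set Sc : α → Finset α := fun t => S.filter (fun v => Covered F v t) with hScdef
  have hScS : ∀ t, Sc t ⊆ S := fun t => filter_subset _ _
  have hScCov : ∀ t, ∀ v ∈ Sc t, v ∈ S ∧ Covered F v t := by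
    intro t v hv
    exact mem_filter.mp hv
  have hdisj : ∀ t ∈ T, ∀ t' ∈ T, t ≠ t' → Disjoint (Sc t) (Sc t') := by
    intro t ht t' ht' hne
    rw [Finset.disjoint_left]
    intro v hv hv'
    obtain ⟨hvS, hc⟩ := hScCov t v hv
    obtain ⟨-, hc'⟩ := hScCov t' v hv'
    exact uniq v hvS t ht hc t' ht' (Ne.symm hne) hc'
  have hSeq : S = T.biUnion Sc := by
    apply Finset.Subset.antisymm
    · intro v hv
      have hv1 : (T.filter fun t => Covered F v t).card = 1 := (mem_filter.mp hv).2
      obtain ⟨t, hteq⟩ := Finset.card_eq_one.mp hv1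
      have htmem : t ∈ T.filter fun t => Covered F v t := by rw [hteq]; simp
      obtain ⟨htT, htc⟩ := mem_filter.mp htmem
      exact mem_biUnion.mpr ⟨t, htT, mem_filter.mpr ⟨hv, htc⟩⟩
    · intro v hv
      obtain ⟨t, -, hvt⟩ := mem_biUnion.mp hv
      exact (mem_filter.mp hvt).1
  have hScard : S.card = ∑ t ∈ T, (Sc t).card := by
    rw [hSeq]; exact card_biUnion hdisj
  -- the set of ordered same-class pairs
  set P : Finset (α × α) := T.biUnion (fun t => (Sc t).offDiag) with hPdef
  have hPdisj : ∀ t ∈ T, ∀ t' ∈ T, t ≠ t' → Disjoint ((Sc t).offDiag) ((Sc t').offDiag) := by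
    intro t ht t' ht' hne
    rw [Finset.disjoint_left]
    intro p hp hp'
    have h1 := (mem_offDiag.mp hp).1
    have h2 := (mem_offDiag.mp hp').1
    exact Finset.disjoint_left.mp (hdisj t ht t' ht' hne) h1 h2
  have hPcard : P.card = ∑ t ∈ T, ((Sc t).card * (Sc t).card - (Sc t).card) := by
    rw [hPdef, card_biUnion hPdisj]
    exact Finset.sum_congr rfl (fun t _ => offDiag_card _)
  have hPmem : ∀ p ∈ P, p.1 ∈ S ∧ p.2 ∈ S ∧ p.1 ≠ p.2 ∧
      ∃ t ∈ T, Covered F p.1 t ∧ Covered F p.2 t := by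
    intro p hp
    obtain ⟨t, htT, hpt⟩ := mem_biUnion.mp hp
    obtain ⟨h1, h2, hne⟩ := mem_offDiag.mp hpt
    exact ⟨(hScCov t _ h1).1, (hScCov t _ h2).1, hne,
      t, htT, (hScCov t _ h1).2, (hScCov t _ h2).2⟩
  -- the covering map
  have hPex : ∀ p ∈ P, ∃ C ∈ F, p.1 ∈ C ∧ p.2 ∈ C := by
    intro p hp
    obtain ⟨h1, h2, hne, t, htT, c1, c2⟩ := hPmem p hp
    exact covS p.1 h1 p.2 h2 hne t htT c1 c2
  have himg : ∀ p ∈ P, coverTriple F p ∈ F.filter (fun T' => AdjT F T T') := by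
    intro p hp
    obtain ⟨h1, h2, hne, t, htT, c1, c2⟩ := hPmem p hp
    obtain ⟨hCF, hp1, hp2⟩ := coverTriple_spec (hPex p hp)
    exact mem_filter.mpr ⟨hCF, adjS p.1 h1 p.2 h2 hne t htT c1 c2 _ hCF hp1 hp2⟩
  -- fibers of the covering map have at most two elements
  have hfib : ∀ b ∈ P.image (coverTriple F),
      (P.filter fun p => coverTriple F p = b).card ≤ 2 := by
    intro b hb
    set Q := P.filter fun p => coverTriple F p = b with hQdef
    rcases Q.eq_empty_or_nonempty with hQ | ⟨p₀, hp₀⟩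
    · rw [hQ]; simp
    · obtain ⟨hp₀P, hp₀b⟩ := mem_filter.mp hp₀
      obtain ⟨h01, h02, h0ne, t₀, ht₀T, c01, c02⟩ := hPmem p₀ hp₀P
      obtain ⟨hbF, hb01, hb02⟩ := coverTriple_spec (hPex p₀ hp₀P)
      rw [hp₀b] at hbF hb01 hb02
      have hQsub : Q ⊆ {p₀, p₀.swap} := by
        intro p hp
        obtain ⟨hpP, hpb⟩ := mem_filter.mp hp
        obtain ⟨h1, h2, hne, t, htT, c1, c2⟩ := hPmem p hpP
        obtain ⟨-, hb1, hb2⟩ := coverTriple_spec (hPex p hpP)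
        rw [hpb] at hb1 hb2
        -- all of p.1, p.2, p₀.1, p₀.2 lie in b
        by_contra hout
        simp only [mem_insert, mem_singleton] at hout
        push_neg at hout
        obtain ⟨hne0, hnes⟩ := hout
        -- claim: one of p.1, p.2 is outside {p₀.1, p₀.2}
        have hcases : (p.1 ≠ p₀.1 ∧ p.1 ≠ p₀.2) ∨ (p.2 ≠ p₀.1 ∧ p.2 ≠ p₀.2) := by
          by_contra hcon
          push_neg at hcon
          obtain ⟨hc1, hc2⟩ := hcon
          rcases Classical.em (p.1 = p₀.1) with h | h
          · rcases Classical.em (p.2 = p₀.1) with h' | h'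
            · exact hne (h.trans h'.symm)
            · exact hne0 (Prod.ext h (hc2 h'))
          · have e1 := hc1 h
            rcases Classical.em (p.2 = p₀.2) with h' | h'
            · exact hne (e1.trans h'.symm)
            · have e2 : p.2 = p₀.1 := by
                by_contra hx
                exact h' (hc2 hx)
              exact hnes (Prod.ext e1 e2)
        rcases hcases with ⟨ha1, ha2⟩ | ⟨ha1, ha2⟩
        · -- p.1, p₀.1, p₀.2 three distinct same-class elements of b
          -- p.2 ∈ {p₀.1, p₀.2} since b has three elements
          have hb3 : b.card = 3 := (hL.1 b hbF).2
          have hsub3 : ({p.1, p₀.1, p₀.2} : Finset α) ⊆ b := by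
            intro w hw
            simp only [mem_insert, mem_singleton] at hw
            rcases hw with rfl | rfl | rfl <;> assumption
          have hcard3 : ({p.1, p₀.1, p₀.2} : Finset α).card = 3 := by
            rw [card_insert_of_notMem (by simp [ha1, ha2]),
              card_insert_of_notMem (by simp [h0ne]), card_singleton]
          have hbeq : ({p.1, p₀.1, p₀.2} : Finset α) = b :=
            Finset.eq_of_subset_of_card_le hsub3 (by rw [hcard3, hb3])
          -- p.2 ∈ b, p.2 ≠ p.1, so p.2 = p₀.1 or p.2 = p₀.2
          have hp2mem : p.2 ∈ ({p.1, p₀.1, p₀.2} : Finset α) := by rw [hbeq]; exact hb2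
          simp only [mem_insert, mem_singleton] at hp2mem
          rcases hp2mem with h | h | h
          · exact hne h.symm
          · -- p.2 = p₀.1 : class of p equals class of p₀
            have hteq : t = t₀ := by
              by_contra htne
              exact uniq p.2 h2 t htT c2 t₀ ht₀T (Ne.symm htne) (h ▸ c01)
            exact noTriple b hbF t htT p.1 h1 p₀.1 h01 p₀.2 h02 hb1 hb01 hb02
              ha1 ha2 h0ne c1 (by rw [hteq]; exact c01) (by rw [hteq]; exact c02)
          · have hteq : t = t₀ := by
              by_contra htne
              exact uniq p.2 h2 t htT c2 t₀ ht₀T (Ne.symm htne) (h ▸ c02)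
            exact noTriple b hbF t htT p.1 h1 p₀.1 h01 p₀.2 h02 hb1 hb01 hb02
              ha1 ha2 h0ne c1 (by rw [hteq]; exact c01) (by rw [hteq]; exact c02)
        · -- symmetric case with p.2 outside
          have hb3 : b.card = 3 := (hL.1 b hbF).2
          have hsub3 : ({p.2, p₀.1, p₀.2} : Finset α) ⊆ b := by
            intro w hw
            simp only [mem_insert, mem_singleton] at hw
            rcases hw with rfl | rfl | rfl <;> assumption
          have hcard3 : ({p.2, p₀.1, p₀.2} : Finset α).card = 3 := by
            rw [card_insert_of_notMem (by simp [ha1, ha2]),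
              card_insert_of_notMem (by simp [h0ne]), card_singleton]
          have hbeq : ({p.2, p₀.1, p₀.2} : Finset α) = b :=
            Finset.eq_of_subset_of_card_le hsub3 (by rw [hcard3, hb3])
          have hp1mem : p.1 ∈ ({p.2, p₀.1, p₀.2} : Finset α) := by rw [hbeq]; exact hb1
          simp only [mem_insert, mem_singleton] at hp1mem
          rcases hp1mem with h | h | h
          · exact hne h
          · have hteq : t = t₀ := by
              by_contra htne
              exact uniq p.1 h1 t htT c1 t₀ ht₀T (Ne.symm htne) (h ▸ c01)
            exact noTriple b hbF t htT p.2 h2 p₀.1 h01 p₀.2 h02 hb2 hb01 hb02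
              ha1 ha2 h0ne c2 (by rw [hteq]; exact c01) (by rw [hteq]; exact c02)
          · have hteq : t = t₀ := by
              by_contra htne
              exact uniq p.1 h1 t htT c1 t₀ ht₀T (Ne.symm htne) (h ▸ c02)
            exact noTriple b hbF t htT p.2 h2 p₀.1 h01 p₀.2 h02 hb2 hb01 hb02
              ha1 ha2 h0ne c2 (by rw [hteq]; exact c01) (by rw [hteq]; exact c02)
      calc Q.card ≤ ({p₀, p₀.swap} : Finset (α × α)).card := card_le_card hQsub
        _ ≤ 2 := card_insert_le _ _ |>.trans (by simp)
  -- pull everything together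
  have hmain : P.card ≤ 2 * (F.filter fun T' => AdjT F T T').card := by
    calc P.card ≤ 2 * (P.image (coverTriple F)).card :=
          Finset.card_le_mul_card_image P 2 hfib
      _ ≤ 2 * (F.filter fun T' => AdjT F T T').card := by
          have : P.image (coverTriple F) ⊆ F.filter fun T' => AdjT F T T' := by
            intro b hb
            obtain ⟨p, hp, rfl⟩ := mem_image.mp hb
            exact himg p hp
          exact Nat.mul_le_mul_left 2 (card_le_card this)
  -- numerical conclusion
  set a := (Sc x).card with hadef
  set b := (Sc y).card with hbdef
  set c := (Sc z).card with hcdef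
  have hsum : S.card = a + b + c := by
    rw [hScard, hTxyz, Finset.sum_insert (by simp [hxy, hxz]),
      Finset.sum_insert (by simp [hyz]), Finset.sum_singleton]
    rw [hadef, hbdef, hcdef]; ring
  have hPsum : P.card = (a * a - a) + (b * b - b) + (c * c - c) := by
    rw [hPcard, hTxyz, Finset.sum_insert (by simp [hxy, hxz]),
      Finset.sum_insert (by simp [hyz]), Finset.sum_singleton]
    rw [hadef, hbdef, hcdef]
    exact (add_assoc _ _ _).symm
  have haa : a ≤ a * a := by
    rcases Nat.eq_zero_or_pos a with h | h
    · simp [h]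
    · exact Nat.le_mul_of_pos_left a h
  have hbb : b ≤ b * b := by
    rcases Nat.eq_zero_or_pos b with h | h
    · simp [h]
    · exact Nat.le_mul_of_pos_left b h
  have hcc : c ≤ c * c := by
    rcases Nat.eq_zero_or_pos c with h | h
    · simp [h]
    · exact Nat.le_mul_of_pos_left c h
  rw [hPsum] at hmain
  have key : ((a : ℝ) * a - a) + ((b : ℝ) * b - b) + ((c : ℝ) * c - c)
      ≤ 2 * ((F.filter fun T' => AdjT F T T').card : ℝ) := by
    have hcast := (Nat.cast_le (α := ℝ)).mpr hmain
    push_cast [Nat.cast_sub haa, Nat.cast_sub hbb, Nat.cast_sub hcc] at hcast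
    linarith
  rw [hvalT]
  have hq : (S.card : ℝ) = (a : ℝ) + b + c := by rw [hsum]; push_cast; ring
  rw [hq]
  nlinarith [sq_nonneg ((a : ℝ) - b), sq_nonneg ((a : ℝ) - c), sq_nonneg ((b : ℝ) - c), key]
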